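/- Let H = (V, C, D) be an (ℓ, m)-uniform mixed hypergraph with |V| ≥ ℓ - 1. If H has a proper coloring using exactly a colors where 2 ≤ a ≤ ℓ - 1, then for every s with a ≤ s ≤ ℓ - 1, H has a proper coloring using exactly s colors. -/

import Mathlib

/-- A coloring is proper for a mixed hypergraph `(C, D)` if every `C`-edge has two
vertices of the same color and every `D`-edge has two vertices of distinct colors. -/
def Proper {V : Type} (C D : Set (Finset V)) (c : V → ℕ) : Prop :=
  (∀ e ∈ C, ∃ u ∈ e, ∃ v ∈ e, u ≠ v ∧ c u = c v) ∧
  (∀ e ∈ D, ∃ u ∈ e, ∃ v ∈ e, c u ≠ c v)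

/-- A coloring uses exactly `s` colors. -/
def UsesExactly {V : Type} [Fintype V] [DecidableEq V] (c : V → ℕ) (s : ℕ) : Prop :=
  (Finset.univ.image c).card = s

lemma split_step {V : Type} [Fintype V] [DecidableEq V] (D : Set (Finset V)) (c : V → ℕ)
    (k : ℕ) (hD : ∀ e ∈ D, ∃ u ∈ e, ∃ v ∈ e, c u ≠ c v)
    (hk : (Finset.univ.image c).card = k) (hlt : k < Fintype.card V) :
    ∃ c' : V → ℕ, (∀ e ∈ D, ∃ u ∈ e, ∃ v ∈ e, c' u ≠ c' v) ∧
      (Finset.univ.image c').card = k + 1 := by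
  obtain ⟨f, hf⟩ := Infinite.exists_notMem_finset (Finset.univ.image c)
  obtain ⟨u, -, v, -, huv, hcv⟩ :=
    Finset.exists_ne_map_eq_of_card_lt_of_maps_to
      (t := Finset.univ.image c)
      (by rw [hk, Finset.card_univ]; exact hlt)
      (fun x _ => Finset.mem_image_of_mem c (Finset.mem_univ x))
  set c' : V → ℕ := Function.update c u f with hc'
  have hrefine : ∀ x y : V, c x ≠ c y → c' x ≠ c' y := by
    intro x y hxy
    by_cases hx : x = u <;> by_cases hy : y = u
    · subst hx; subst hy; exact absurd rfl hxy
    · simp only [hc', hx, Function.update_self, Function.update_of_ne hy]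
      exact fun h => hf (h ▸ Finset.mem_image_of_mem c (Finset.mem_univ y))
    · simp only [hc', hy, Function.update_self, Function.update_of_ne hx]
      exact fun h => hf (h ▸ Finset.mem_image_of_mem c (Finset.mem_univ x))
    · simpa only [hc', Function.update_of_ne hx, Function.update_of_ne hy] using hxy
  refine ⟨c', fun e he => ?_, ?_⟩
  · obtain ⟨x, hx, y, hy, hxy⟩ := hD e he
    exact ⟨x, hx, y, hy, hrefine x y hxy⟩
  · have himg : Finset.univ.image c' = insert f (Finset.univ.image c) := by
      ext z
      simp only [Finset.mem_insert, Finset.mem_image, Finset.mem_univ, true_and]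
      constructor
      · rintro ⟨w, rfl⟩
        by_cases hw : w = u
        · left; simp [hc', hw]
        · right; exact ⟨w, (Function.update_of_ne hw f c).symm⟩
      · rintro (rfl | ⟨w, rfl⟩)
        · exact ⟨u, by simp [hc']⟩
        · by_cases hw : w = u
          · exact ⟨v, by simp [hc', Function.update_of_ne (Ne.symm huv), hw ▸ hcv]⟩
          · exact ⟨w, Function.update_of_ne hw f c⟩
    rw [himg, Finset.card_insert_of_notMem hf, hk]

theorem stmt3 {V : Type} [Fintype V] [DecidableEq V] (C D : Set (Finset V)) (ℓ m : ℕ)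
    (hC : ∀ e ∈ C, e.card = ℓ) (hD : ∀ e ∈ D, e.card = m)
    (hV : ℓ - 1 ≤ Fintype.card V) (a : ℕ) (ha2 : 2 ≤ a) (hal : a ≤ ℓ - 1)
    (c : V → ℕ) (hc : Proper C D c) (hca : UsesExactly c a) :
    ∀ s : ℕ, a ≤ s → s ≤ ℓ - 1 →
      ∃ c' : V → ℕ, Proper C D c' ∧ UsesExactly c' s := by
  -- First: any coloring with exactly s ≤ ℓ-1 colors automatically satisfies the C-condition.
  have hℓ : 3 ≤ ℓ := by omega
  have hCauto : ∀ (c' : V → ℕ) (s : ℕ), s ≤ ℓ - 1 → (Finset.univ.image c').card = s →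
      ∀ e ∈ C, ∃ u ∈ e, ∃ v ∈ e, u ≠ v ∧ c' u = c' v := by
    intro c' s hs hcard e he
    apply Finset.exists_ne_map_eq_of_card_lt_of_maps_to
      (t := Finset.univ.image c')
    · rw [hcard, hC e he]; omega
    · exact fun x _ => Finset.mem_image_of_mem c' (Finset.mem_univ x)
  -- By induction on s from a, build a coloring with exactly s colors and the D-condition.
  have key : ∀ s : ℕ, a ≤ s → s ≤ ℓ - 1 →
      ∃ c' : V → ℕ, (∀ e ∈ D, ∃ u ∈ e, ∃ v ∈ e, c' u ≠ c' v) ∧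
        (Finset.univ.image c').card = s := by
    intro s has
    induction s, has using Nat.le_induction with
    | base => exact fun _ => ⟨c, hc.2, hca⟩
    | succ n hn ih =>
      intro hsl
      obtain ⟨c', hD', hcard'⟩ := ih (by omega)
      exact split_step D c' n hD' hcard' (by omega)
  intro s has hsl
  obtain ⟨c', hD', hcard'⟩ := key s has hsl
  exact ⟨c', ⟨hCauto c' s hsl hcard', hD'⟩, hcard'⟩
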